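/- Suppose 1, θ, α₁ are linearly independent over ℚ, and let q₂ be a positive integer and r₂ ∈ ℕ. Then the set { ((q₂·m + r₂) − k·θ, k·α₁ mod 1) : k, m ∈ ℕ } is dense in ℝ × (ℝ/ℤ). In particular, if α₂ = p₂/q₂ is rational, then the closure of S contains ℝ × (ℝ/ℤ) × { r₂·α₂ mod 1 }. -/

import Mathlib

open Filter Topology

private lemma indepQ {θ α₁ : ℝ} (hli : LinearIndependent ℚ ![(1 : ℝ), θ, α₁]) :
    ∀ a b c : ℚ, (a : ℝ) * θ + (b : ℝ) * α₁ + (c : ℝ) = 0 → a = 0 ∧ b = 0 := by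
  intro a b c h
  have h2 := Fintype.linearIndependent_iff.mp hli ![c, a, b] ?_
  · exact ⟨by simpa using h2 1, by simpa using h2 2⟩
  · show ∑ i : Fin 3, (![c, a, b] i) • (![(1:ℝ), θ, α₁] i) = 0
    simp [Fin.sum_univ_three, Rat.smul_def]
    linarith [h]

private lemma indepZ {θ α₁ : ℝ} (hli : LinearIndependent ℚ ![(1 : ℝ), θ, α₁]) :
    ∀ a b c : ℤ, (a : ℝ) * θ + (b : ℝ) * α₁ + (c : ℝ) = 0 → a = 0 ∧ b = 0 := by
  intro a b c h
  have := indepQ hli a b c (by push_cast; push_cast at h; linarith)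
  exact ⟨by exact_mod_cast this.1, by exact_mod_cast this.2⟩

private lemma comp_zsmul (θ α₁ : ℝ) (q₂ : ℕ) (k : ℤ) :
    k • ((((θ : ℝ) : AddCircle ((q₂ : ℕ) : ℝ)), ((α₁ : ℝ) : AddCircle (1 : ℝ))) :
        AddCircle ((q₂ : ℕ) : ℝ) × AddCircle (1 : ℝ)) =
      ((((k : ℝ) * θ : ℝ) : AddCircle ((q₂ : ℕ) : ℝ)), (((k : ℝ) * α₁ : ℝ) : AddCircle (1 : ℝ))) := by
  apply Prod.ext
  · show k • ((θ : ℝ) : AddCircle ((q₂ : ℕ) : ℝ)) = _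
    rw [← QuotientAddGroup.mk_zsmul, zsmul_eq_mul]
  · show k • ((α₁ : ℝ) : AddCircle (1 : ℝ)) = _
    rw [← QuotientAddGroup.mk_zsmul, zsmul_eq_mul]

private lemma small_mult (θ α₁ : ℝ) (q₂ : ℕ) (hq₂ : 0 < q₂) :
    ∀ δ : ℝ, 0 < δ → ∀ M : ℕ, ∃ d : ℕ, M + 1 ≤ d ∧
      ‖(d : ℤ) • ((((θ : ℝ) : AddCircle ((q₂ : ℕ) : ℝ)), ((α₁ : ℝ) : AddCircle (1 : ℝ))) :
        AddCircle ((q₂ : ℕ) : ℝ) × AddCircle (1 : ℝ))‖ < δ := by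
  intro δ hδ M
  haveI : Fact ((0 : ℝ) < ((q₂ : ℕ) : ℝ)) := ⟨by exact_mod_cast hq₂⟩
  haveI : Fact ((0 : ℝ) < (1 : ℝ)) := ⟨one_pos⟩
  set x₀ : AddCircle ((q₂ : ℕ) : ℝ) × AddCircle (1 : ℝ) :=
    (((θ : ℝ) : AddCircle ((q₂ : ℕ) : ℝ)), ((α₁ : ℝ) : AddCircle (1 : ℝ))) with hx₀
  obtain ⟨a, -, φ, hφ, hconv⟩ := IsCompact.tendsto_subseq (x := fun n : ℕ =>
    ((n * (M + 1) : ℕ) : ℤ) • x₀) isCompact_univ (fun n => Set.mem_univ _)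
  have hc : CauchySeq ((fun n : ℕ => ((n * (M + 1) : ℕ) : ℤ) • x₀) ∘ φ) := hconv.cauchySeq
  obtain ⟨N, hN⟩ := Metric.cauchySeq_iff'.mp hc δ hδ
  have h1 := hN (N + 1) (Nat.le_succ N)
  have hlt : φ N < φ (N + 1) := hφ (Nat.lt_succ_self N)
  refine ⟨(φ (N + 1) - φ N) * (M + 1), Nat.le_mul_of_pos_left (M + 1) (Nat.sub_pos_of_lt hlt), ?_⟩
  have hcast : (((φ (N + 1) - φ N) * (M + 1) : ℕ) : ℤ)
      = ((φ (N + 1) * (M + 1) : ℕ) : ℤ) - ((φ N * (M + 1) : ℕ) : ℤ) := by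
    push_cast [Nat.cast_sub hlt.le]
    ring
  have h2 : dist ((((φ (N + 1)) * (M + 1) : ℕ) : ℤ) • x₀) (((φ N * (M + 1) : ℕ) : ℤ) • x₀)
      = ‖(((φ (N + 1) - φ N) * (M + 1) : ℕ) : ℤ) • x₀‖ := by
    rw [dist_eq_norm, ← sub_smul, ← hcast]
  simp only [Function.comp] at h1
  rw [h2] at h1
  exact h1

private def fproj (u : ℝ × ℝ) : (ℝ × ℝ) →+ ℝ :=
  AddMonoidHom.mk' (fun w => w.1 * u.2 - w.2 * u.1) (by intro a b; simp [Prod.fst_add, Prod.snd_add]; ring)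

private lemma line_mem_closure {G : AddSubgroup (ℝ × ℝ)}
    (hsmall : ∀ δ : ℝ, 0 < δ → ∃ g ∈ G, g ≠ 0 ∧ ‖g‖ < δ) :
    ∃ u : ℝ × ℝ, ‖u‖ = 1 ∧ ∀ t : ℝ, t • u ∈ closure (G : Set (ℝ × ℝ)) := by
  have hg : ∀ n : ℕ, ∃ g : ℝ × ℝ, g ∈ G ∧ g ≠ 0 ∧ ‖g‖ < 1 / (n + 1) := by
    intro n
    obtain ⟨g, hgG, hg0, hgn⟩ := hsmall (1 / (n + 1)) (by positivity)
    exact ⟨g, hgG, hg0, hgn⟩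
  choose g hgG hg0 hgn using hg
  have hnpos : ∀ n, 0 < ‖g n‖ := fun n => norm_pos_iff.mpr (hg0 n)
  set u : ℕ → ℝ × ℝ := fun n => ‖g n‖⁻¹ • g n with hu
  have husph : ∀ n, u n ∈ Metric.sphere (0 : ℝ × ℝ) 1 := by
    intro n
    simp only [Metric.mem_sphere, dist_zero_right, hu, norm_smul, norm_inv, norm_norm]
    exact inv_mul_cancel₀ (hnpos n).ne'
  obtain ⟨U, hUsph, φ, hφ, hconv⟩ :=
    (isCompact_sphere (0 : ℝ × ℝ) 1).tendsto_subseq husph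
  have hU1 : ‖U‖ = 1 := by simpa [dist_zero_right] using hUsph
  refine ⟨U, hU1, fun t => ?_⟩
  -- the approximating sequence
  set c : ℕ → ℤ := fun n => round (t / ‖g (φ n)‖) with hc
  have hgφ : Tendsto (fun n => ‖g (φ n)‖) atTop (𝓝 0) := by
    have h1 : Tendsto (fun n : ℕ => 1 / ((n : ℝ) + 1)) atTop (𝓝 0) :=
      tendsto_one_div_add_atTop_nhds_zero_nat
    refine squeeze_zero (fun n => (hnpos _).le) (fun n => ?_) h1
    calc ‖g (φ n)‖ ≤ 1 / ((φ n : ℝ) + 1) := (hgn (φ n)).le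
      _ ≤ 1 / ((n : ℝ) + 1) := by
          gcongr
          exact_mod_cast hφ.le_apply
  have hscal : Tendsto (fun n => (c n : ℝ) * ‖g (φ n)‖) atTop (𝓝 t) := by
    rw [tendsto_iff_dist_tendsto_zero]
    refine squeeze_zero (fun n => dist_nonneg) (fun n => ?_)
      (by simpa using hgφ.const_mul (1/2 : ℝ))
    have h2 : |(c n : ℝ) - t / ‖g (φ n)‖| ≤ 1 / 2 := by
      rw [abs_sub_comm]
      simpa [hc] using abs_sub_round (t / ‖g (φ n)‖)
    have h4 : (c n : ℝ) * ‖g (φ n)‖ - t = ((c n : ℝ) - t / ‖g (φ n)‖) * ‖g (φ n)‖ := by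
      rw [sub_mul, div_mul_cancel₀ _ (hnpos (φ n)).ne']
    have h3 : dist ((c n : ℝ) * ‖g (φ n)‖) t
        = |(c n : ℝ) - t / ‖g (φ n)‖| * ‖g (φ n)‖ := by
      rw [Real.dist_eq, h4, abs_mul, abs_of_pos (hnpos (φ n))]
    rw [h3]
    calc |(c n : ℝ) - t / ‖g (φ n)‖| * ‖g (φ n)‖ ≤ 1 / 2 * ‖g (φ n)‖ := by
          exact mul_le_mul_of_nonneg_right h2 (hnpos _).le
      _ = 2⁻¹ * ‖g (φ n)‖ := by norm_num
  have hmain : Tendsto (fun n => ((c n : ℝ) * ‖g (φ n)‖) • u (φ n)) atTop (𝓝 (t • U)) :=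
    hscal.smul hconv
  have hform : ∀ n, ((c n : ℝ) * ‖g (φ n)‖) • u (φ n) = (c n : ℤ) • g (φ n) := by
    intro n
    rw [hu]
    rw [smul_smul, mul_assoc, mul_inv_cancel₀ (hnpos (φ n)).ne', mul_one]
    exact (Int.cast_smul_eq_zsmul ℝ (c n) (g (φ n))).symm ▸ rfl
  refine mem_closure_of_tendsto hmain (Eventually.of_forall fun n => ?_)
  rw [hform n]
  exact zsmul_mem (hgG (φ n)) (c n)

private lemma dense_of_line {G : AddSubgroup (ℝ × ℝ)} {u : ℝ × ℝ} (hu : ‖u‖ = 1)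
    (hline : ∀ t : ℝ, t • u ∈ closure (G : Set (ℝ × ℝ)))
    (hf : Dense ((AddSubgroup.map (fproj u) G : AddSubgroup ℝ) : Set ℝ)) :
    Dense (G : Set (ℝ × ℝ)) := by
  have hs : 0 < u.1 ^ 2 + u.2 ^ 2 := by
    have h1 : u ≠ 0 := norm_pos_iff.mp (hu ▸ one_pos)
    have h2 : u.1 ≠ 0 ∨ u.2 ≠ 0 := by
      by_contra hcon
      push_neg at hcon
      exact h1 (Prod.ext hcon.1 hcon.2)
    rcases h2 with h | h <;> positivity
  set s := u.1 ^ 2 + u.2 ^ 2 with hsdef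
  rw [← dense_closure]
  rw [Metric.dense_iff]
  intro z ε hε
  -- find g ∈ G with f g close to f z
  obtain ⟨y, hy1, hy2⟩ := Metric.dense_iff.mp hf (fproj u z) (ε * s) (by positivity)
  obtain ⟨gg, hgg, rfl⟩ := hy2
  refine ⟨gg - (((gg.1 - z.1) * u.1 + (gg.2 - z.2) * u.2) / s) • u, ?_, ?_⟩
  · -- distance bound
    rw [Metric.mem_ball]
    set cc := ((gg.1 - z.1) * u.1 + (gg.2 - z.2) * u.2) / s with hcc
    have hdiff : gg - cc • u - z =
        (((fproj u gg - fproj u z) / s) * u.2, -(((fproj u gg - fproj u z) / s) * u.1)) := by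
      have e1 : (gg - cc • u - z).1 = gg.1 - cc * u.1 - z.1 := rfl
      have e2 : (gg - cc • u - z).2 = gg.2 - cc * u.2 - z.2 := rfl
      have hfg : fproj u gg = gg.1 * u.2 - gg.2 * u.1 := rfl
      have hfz : fproj u z = z.1 * u.2 - z.2 * u.1 := rfl
      apply Prod.ext
      · rw [e1, hfg, hfz, hcc]
        field_simp
        ring
      · rw [e2, hfg, hfz, hcc]
        field_simp
        ring
    have hu1 : |u.1| ≤ 1 := by
      have := norm_fst_le u
      rwa [hu, Real.norm_eq_abs] at this
    have hu2 : |u.2| ≤ 1 := by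
      have := norm_snd_le u
      rwa [hu, Real.norm_eq_abs] at this
    have hyd : |fproj u gg - fproj u z| < ε * s := by
      rwa [Metric.mem_ball, Real.dist_eq] at hy1
    have hb : ∀ w : ℝ, |w| ≤ 1 → |(fproj u gg - fproj u z) / s * w| < ε := by
      intro w hw
      rw [abs_mul, abs_div, abs_of_pos hs]
      calc |fproj u gg - fproj u z| / s * |w| ≤ |fproj u gg - fproj u z| / s * 1 := by
            apply mul_le_mul_of_nonneg_left hw (by positivity)
        _ < ε := by
            rw [mul_one, div_lt_iff₀ hs]
            linarith [hyd]
    rw [dist_eq_norm, hdiff, Prod.norm_def]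
    simp only [Real.norm_eq_abs, abs_neg]
    exact max_lt (hb _ hu2) (hb _ hu1)
  · -- membership in closure
    have h1 : (gg : ℝ × ℝ) ∈ G.topologicalClosure := by
      exact AddSubgroup.le_topologicalClosure G hgg
    have h2 : (((gg.1 - z.1) * u.1 + (gg.2 - z.2) * u.2) / s) • u ∈ G.topologicalClosure := by
      exact hline _
    exact AddSubgroup.sub_mem _ h1 h2

private lemma Gdense (θ α₁ : ℝ) (hli : LinearIndependent ℚ ![(1 : ℝ), θ, α₁])
    (q₂ : ℕ) (hq₂ : 0 < q₂) :
    Dense ((AddSubgroup.closure {((θ, α₁) : ℝ × ℝ), ((((q₂ : ℕ) : ℝ), 0) : ℝ × ℝ),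
      (((0 : ℝ), 1) : ℝ × ℝ)} : AddSubgroup (ℝ × ℝ)) : Set (ℝ × ℝ)) := by
  set Q : ℝ := ((q₂ : ℕ) : ℝ) with hQdef
  have hQ : 0 < Q := by rw [hQdef]; exact_mod_cast hq₂
  set v : ℝ × ℝ := (θ, α₁) with hv
  set E1 : ℝ × ℝ := (Q, 0) with hE1
  set E2 : ℝ × ℝ := ((0 : ℝ), 1) with hE2
  set G : AddSubgroup (ℝ × ℝ) := AddSubgroup.closure {v, E1, E2} with hG
  have hvG : v ∈ G := AddSubgroup.subset_closure (by simp)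
  have hE1G : E1 ∈ G := AddSubgroup.subset_closure (by simp)
  have hE2G : E2 ∈ G := AddSubgroup.subset_closure (by simp)
  -- small nonzero elements of G
  have hGsmall : ∀ δ : ℝ, 0 < δ → ∃ g ∈ G, g ≠ 0 ∧ ‖g‖ < δ := by
    intro δ hδ
    obtain ⟨d, hd1, hd2⟩ := small_mult θ α₁ q₂ hq₂ δ hδ 0
    rw [comp_zsmul] at hd2
    set p : ℤ := round (Q⁻¹ * (((d : ℤ) : ℝ) * θ)) with hp
    set q : ℤ := round ((1 : ℝ)⁻¹ * (((d : ℤ) : ℝ) * α₁)) with hq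
    rw [Prod.norm_def] at hd2
    have hn1 : |((d : ℤ) : ℝ) * θ - (p : ℝ) * Q| < δ := by
      have he := AddCircle.norm_eq Q (x := ((d : ℤ) : ℝ) * θ)
      have := lt_of_le_of_lt (le_max_left
        ‖((((d : ℤ) : ℝ) * θ : ℝ) : AddCircle Q)‖
        ‖((((d : ℤ) : ℝ) * α₁ : ℝ) : AddCircle (1 : ℝ))‖) hd2
      rwa [he] at this
    have hn2 : |((d : ℤ) : ℝ) * α₁ - (q : ℝ) * 1| < δ := by
      have he := AddCircle.norm_eq (1 : ℝ) (x := ((d : ℤ) : ℝ) * α₁)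
      have := lt_of_le_of_lt (le_max_right
        ‖((((d : ℤ) : ℝ) * θ : ℝ) : AddCircle Q)‖
        ‖((((d : ℤ) : ℝ) * α₁ : ℝ) : AddCircle (1 : ℝ))‖) hd2
      rwa [he] at this
    have hfst : ((d : ℤ) • v - p • E1 - q • E2).1 = ((d : ℤ) : ℝ) * θ - (p : ℝ) * Q := by
      show (d : ℤ) • v.1 - p • E1.1 - q • E2.1 = _
      rw [hv, hE1, hE2]
      simp [zsmul_eq_mul]
    have hsnd : ((d : ℤ) • v - p • E1 - q • E2).2 = ((d : ℤ) : ℝ) * α₁ - (q : ℝ) * 1 := by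
      show (d : ℤ) • v.2 - p • E1.2 - q • E2.2 = _
      rw [hv, hE1, hE2]
      simp [zsmul_eq_mul]
    refine ⟨(d : ℤ) • v - p • E1 - q • E2, ?_, ?_, ?_⟩
    · exact AddSubgroup.sub_mem _ (AddSubgroup.sub_mem _ (zsmul_mem hvG _) (zsmul_mem hE1G _))
        (zsmul_mem hE2G _)
    · intro hzero
      have hz1 : ((d : ℤ) : ℝ) * θ - (p : ℝ) * Q = 0 := by
        rw [← hfst, hzero]; rfl
      have := indepZ hli d 0 (-(p * q₂)) (by push_cast; push_cast [hQdef] at hz1; linarith)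
      omega
    · rw [Prod.norm_def, hfst, hsnd, Real.norm_eq_abs, Real.norm_eq_abs]
      exact max_lt hn1 hn2
  obtain ⟨u, hu1, hline⟩ := line_mem_closure hGsmall
  rcases AddSubgroup.dense_or_cyclic (AddSubgroup.map (fproj u) G) with hd | ⟨a, ha⟩
  · exact dense_of_line hu1 hline hd
  · exfalso
    have hmem : ∀ w ∈ G, ∃ n : ℤ, (n : ℝ) * a = fproj u w := by
      intro w hw
      have : fproj u w ∈ AddSubgroup.map (fproj u) G := AddSubgroup.mem_map_of_mem _ hw
      rw [ha, AddSubgroup.mem_closure_singleton] at this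
      obtain ⟨n, hn⟩ := this
      exact ⟨n, by rw [← hn, zsmul_eq_mul]⟩
    obtain ⟨n3, hn3⟩ := hmem v hvG
    obtain ⟨n1, hn1⟩ := hmem E1 hE1G
    obtain ⟨n2, hn2⟩ := hmem E2 hE2G
    have hfv : fproj u v = θ * u.2 - α₁ * u.1 := rfl
    have hfe1 : fproj u E1 = Q * u.2 := by
      show Q * u.2 - 0 * u.1 = Q * u.2; ring
    have hfe2 : fproj u E2 = -u.1 := by
      show 0 * u.2 - 1 * u.1 = -u.1; ring
    rw [hfv] at hn3; rw [hfe1] at hn1; rw [hfe2] at hn2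
    have hune : u ≠ 0 := by
      intro h0
      rw [h0, norm_zero] at hu1
      exact one_ne_zero hu1.symm
    by_cases hA : a = 0
    · subst hA
      have h2 : u.2 = 0 := by
        have : Q * u.2 = 0 := by rw [← hn1]; ring
        rcases mul_eq_zero.mp this with h | h
        · exact absurd h hQ.ne'
        · exact h
      have h1 : u.1 = 0 := by
        have : -u.1 = 0 := by rw [← hn2]; ring
        linarith [this]
      exact hune (Prod.ext h1 h2)
    · have hrel : a * ((n1 : ℝ) * θ + ((n2 : ℝ) * Q) * α₁ + (-(n3 : ℝ) * Q)) = 0 := by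
        linear_combination θ * hn1 + Q * α₁ * hn2 - Q * hn3
      have hfac : (n1 : ℝ) * θ + ((n2 : ℝ) * Q) * α₁ + (-(n3 : ℝ) * Q) = 0 := by
        rcases mul_eq_zero.mp hrel with h | h
        · exact absurd h hA
        · exact h
      have := indepZ hli n1 (n2 * q₂) (-(n3 * q₂)) (by push_cast [hQdef] at hfac ⊢; linarith)
      have hn10 : n1 = 0 := this.1
      have hn20 : n2 = 0 := by
        rcases mul_eq_zero.mp this.2 with h | h
        · exact h
        · exfalso; exact hq₂.ne' (by exact_mod_cast h)
      rw [hn10] at hn1; rw [hn20] at hn2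
      have h2 : u.2 = 0 := by
        have : Q * u.2 = 0 := by rw [← hn1]; ring
        rcases mul_eq_zero.mp this with h | h
        · exact absurd h hQ.ne'
        · exact h
      have h1 : u.1 = 0 := by
        have : -u.1 = 0 := by rw [← hn2]; ring
        linarith [this]
      exact hune (Prod.ext h1 h2)

private lemma Adense (θ α₁ : ℝ) (hli : LinearIndependent ℚ ![(1 : ℝ), θ, α₁])
    (q₂ : ℕ) (hq₂ : 0 < q₂) :
    Dense (Set.range fun k : ℤ =>
      k • ((((θ : ℝ) : AddCircle ((q₂ : ℕ) : ℝ)), ((α₁ : ℝ) : AddCircle (1 : ℝ))) :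
        AddCircle ((q₂ : ℕ) : ℝ) × AddCircle (1 : ℝ))) := by
  set Q : ℝ := ((q₂ : ℕ) : ℝ) with hQdef
  set A := AddCircle Q × AddCircle (1 : ℝ) with hA
  set x₀ : A := (((θ : ℝ) : AddCircle Q), ((α₁ : ℝ) : AddCircle (1 : ℝ))) with hx₀
  set pm : (ℝ × ℝ) →+ A :=
    (QuotientAddGroup.mk' (AddSubgroup.zmultiples Q)).prodMap
      (QuotientAddGroup.mk' (AddSubgroup.zmultiples (1 : ℝ))) with hpm
  have hpma : ∀ w : ℝ × ℝ, pm w = (((w.1 : ℝ) : AddCircle Q), ((w.2 : ℝ) : AddCircle (1 : ℝ))) :=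
    fun w => rfl
  have hpc : Continuous pm := by
    have : (pm : ℝ × ℝ → A) = fun w : ℝ × ℝ =>
        (((w.1 : ℝ) : AddCircle Q), ((w.2 : ℝ) : AddCircle (1 : ℝ))) := rfl
    rw [this]
    exact ((continuous_quotient_mk'.comp continuous_fst).prodMk
      (continuous_quotient_mk'.comp continuous_snd))
  have hps : Function.Surjective (pm : ℝ × ℝ → A) := by
    rintro ⟨y1, y2⟩
    obtain ⟨a, rfl⟩ := QuotientAddGroup.mk'_surjective (AddSubgroup.zmultiples Q) y1
    obtain ⟨b, rfl⟩ := QuotientAddGroup.mk'_surjective (AddSubgroup.zmultiples (1 : ℝ)) y2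
    exact ⟨(a, b), rfl⟩
  set G : AddSubgroup (ℝ × ℝ) :=
    AddSubgroup.closure {((θ, α₁) : ℝ × ℝ), ((Q, 0) : ℝ × ℝ), (((0 : ℝ), 1) : ℝ × ℝ)} with hG
  have himg : Dense ((AddSubgroup.map pm G : AddSubgroup A) : Set A) := by
    rw [dense_iff_closure_eq]
    apply Set.eq_univ_of_univ_subset
    have h1 : (Set.univ : Set A) = pm '' closure (G : Set (ℝ × ℝ)) := by
      rw [(Gdense θ α₁ hli q₂ hq₂).closure_eq, Set.image_univ, Set.range_eq_univ.mpr hps]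
    rw [h1, AddSubgroup.coe_map]
    exact image_closure_subset_closure_image hpc
  have hsub : ((AddSubgroup.map pm G : AddSubgroup A) : Set A) ⊆ Set.range fun k : ℤ => k • x₀ := by
    have hle : AddSubgroup.map pm G ≤ AddSubgroup.closure {x₀} := by
      rw [hG, AddMonoidHom.map_closure, AddSubgroup.closure_le]
      rintro y ⟨w, hw, rfl⟩
      simp only [Set.mem_insert_iff, Set.mem_singleton_iff] at hw
      rcases hw with rfl | rfl | rfl
      · exact AddSubgroup.subset_closure rfl
      · have : pm ((Q, 0) : ℝ × ℝ) = 0 := by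
          rw [hpma]
          apply Prod.ext
          · exact AddCircle.coe_period Q
          · show ((0 : ℝ) : AddCircle (1:ℝ)) = 0
            exact QuotientAddGroup.mk_zero _
        rw [this]
        exact AddSubgroup.zero_mem _
      · have : pm (((0 : ℝ), 1) : ℝ × ℝ) = 0 := by
          rw [hpma]
          apply Prod.ext
          · show ((0 : ℝ) : AddCircle Q) = 0
            exact QuotientAddGroup.mk_zero _
          · exact AddCircle.coe_period 1
        rw [this]
        exact AddSubgroup.zero_mem _
    intro y hy
    obtain ⟨n, hn⟩ := AddSubgroup.mem_closure_singleton.mp (hle hy)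
    exact ⟨n, hn⟩
  exact himg.mono hsub

private lemma tail_dense (θ α₁ : ℝ) (hli : LinearIndependent ℚ ![(1 : ℝ), θ, α₁])
    (q₂ : ℕ) (hq₂ : 0 < q₂) :
    ∀ z : AddCircle ((q₂ : ℕ) : ℝ) × AddCircle (1 : ℝ), ∀ ε : ℝ, 0 < ε → ∀ K : ℕ,
      ∃ k : ℕ, K ≤ k ∧ dist ((k : ℤ) •
        ((((θ : ℝ) : AddCircle ((q₂ : ℕ) : ℝ)), ((α₁ : ℝ) : AddCircle (1 : ℝ))) :
          AddCircle ((q₂ : ℕ) : ℝ) × AddCircle (1 : ℝ))) z < ε := by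
  intro z ε hε K
  set x₀ : AddCircle ((q₂ : ℕ) : ℝ) × AddCircle (1 : ℝ) :=
    (((θ : ℝ) : AddCircle ((q₂ : ℕ) : ℝ)), ((α₁ : ℝ) : AddCircle (1 : ℝ))) with hx₀
  obtain ⟨y, hy1, hy2⟩ := Metric.dense_iff.mp (Adense θ α₁ hli q₂ hq₂) z (ε / 2) (half_pos hε)
  obtain ⟨j, rfl⟩ := hy2
  obtain ⟨d, hd1, hd2⟩ := small_mult θ α₁ q₂ hq₂ (ε / 2) (half_pos hε) (K + j.natAbs)
  have hd1' : (K : ℤ) + j.natAbs + 1 ≤ (d : ℤ) := by exact_mod_cast hd1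
  have hjd : (0 : ℤ) ≤ j + d := by omega
  have hKk : K ≤ (j + (d : ℤ)).toNat := by
    exact (Int.le_toNat hjd).mpr (by omega)
  refine ⟨(j + (d : ℤ)).toNat, hKk, ?_⟩
  have hcast : (((j + (d : ℤ)).toNat : ℕ) : ℤ) = j + d := Int.toNat_of_nonneg hjd
  rw [hcast]
  have htri : dist ((j + (d : ℤ)) • x₀) z
      ≤ dist ((j + (d : ℤ)) • x₀) (j • x₀) + dist (j • x₀) z := dist_triangle _ _ _
  have h1 : dist ((j + (d : ℤ)) • x₀) (j • x₀) = ‖(d : ℤ) • x₀‖ := by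
    have he : j + (d : ℤ) - j = (d : ℤ) := by omega
    rw [dist_eq_norm, ← sub_smul, he]
  have h2 : dist (j • x₀) z < ε / 2 := by
    rw [Metric.mem_ball] at hy1
    exact hy1
  calc dist ((j + (d : ℤ)) • x₀) z ≤ ‖(d : ℤ) • x₀‖ + dist (j • x₀) z := by rw [← h1]; exact htri
    _ < ε / 2 + ε / 2 := by exact add_lt_add hd2 h2
    _ = ε := add_halves ε

private lemma key_dense (θ α₁ : ℝ) (hθ : 0 < θ)
    (hli : LinearIndependent ℚ ![(1 : ℝ), θ, α₁]) (q₂ : ℕ) (hq₂ : 0 < q₂) (r₂ : ℕ) :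
    Dense {x : ℝ × AddCircle (1 : ℝ) | ∃ k m : ℕ,
      x = (((q₂ * m + r₂ : ℕ) : ℝ) - (k : ℝ) * θ,
        (((k : ℝ) * α₁ : ℝ) : AddCircle (1 : ℝ)))} := by
  set Q : ℝ := ((q₂ : ℕ) : ℝ) with hQdef
  have hQ : 0 < Q := by rw [hQdef]; exact_mod_cast hq₂
  rw [Metric.dense_iff]
  intro x ε hε
  obtain ⟨K, hK⟩ := exists_nat_gt ((((r₂ : ℝ)) + |x.1| + ε) / θ)
  have hKθ : (r₂ : ℝ) + |x.1| + ε < K * θ := by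
    rw [div_lt_iff₀ hθ] at hK
    linarith
  set z : AddCircle Q × AddCircle (1 : ℝ) := ((((r₂ : ℝ) - x.1 : ℝ) : AddCircle Q), x.2) with hz
  obtain ⟨k, hkK, hkd⟩ := tail_dense θ α₁ hli q₂ hq₂ z ε hε K
  rw [comp_zsmul] at hkd
  have hkc : (((k : ℕ) : ℤ) : ℝ) = (k : ℝ) := by push_cast; ring
  rw [hkc] at hkd
  rw [Prod.dist_eq] at hkd
  have hd1 : dist (((k : ℝ) * θ : ℝ) : AddCircle Q) (((r₂ : ℝ) - x.1 : ℝ) : AddCircle Q) < ε :=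
    lt_of_le_of_lt (le_max_left _ _) hkd
  have hd2 : dist ((((k : ℝ) * α₁ : ℝ) : AddCircle (1 : ℝ))) x.2 < ε :=
    lt_of_le_of_lt (le_max_right _ _) hkd
  -- extract the integer
  have hd1' : ‖(((k : ℝ) * θ - ((r₂ : ℝ) - x.1) : ℝ) : AddCircle Q)‖ < ε := by
    rw [QuotientAddGroup.mk_sub, ← dist_eq_norm]
    exact hd1
  set c : ℝ := (k : ℝ) * θ - ((r₂ : ℝ) - x.1) with hc
  set M : ℤ := round (Q⁻¹ * c) with hM
  have habs : |c - (M : ℝ) * Q| < ε := by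
    rw [AddCircle.norm_eq] at hd1'
    exact hd1'
  have hMpos : 0 < M := by
    by_contra hcon
    push_neg at hcon
    have h1 : (M : ℝ) * Q ≤ 0 :=
      mul_nonpos_of_nonpos_of_nonneg (by exact_mod_cast hcon) hQ.le
    have h2 : (K : ℝ) * θ ≤ (k : ℝ) * θ := by
      apply mul_le_mul_of_nonneg_right _ hθ.le
      exact_mod_cast hkK
    have h3 : -x.1 ≤ |x.1| := neg_le_abs x.1
    have h4 : c - (M : ℝ) * Q < ε := (abs_lt.mp habs).2
    rw [hc] at h4
    nlinarith
  set m : ℕ := M.toNat with hm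
  have hmM : ((m : ℕ) : ℝ) = (M : ℝ) := by
    have : ((m : ℕ) : ℤ) = M := Int.toNat_of_nonneg hMpos.le
    exact_mod_cast this
  refine ⟨(((q₂ * m + r₂ : ℕ) : ℝ) - (k : ℝ) * θ,
    (((k : ℝ) * α₁ : ℝ) : AddCircle (1 : ℝ))), ?_, k, m, rfl⟩
  rw [Metric.mem_ball, Prod.dist_eq]
  apply max_lt
  · rw [Real.dist_eq]
    have hval : ((q₂ * m + r₂ : ℕ) : ℝ) - (k : ℝ) * θ - x.1 = -(c - (M : ℝ) * Q) := by
      push_cast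
      rw [hmM, hc, hQdef]
      ring
    rw [hval, abs_neg]
    exact habs
  · exact hd2

/-- The set `S = { (m − k·θ, k·α₁ mod 1, m·α₂ mod 1) : k, m ∈ ℕ }` in
`ℝ × (ℝ/ℤ) × (ℝ/ℤ)`. -/
def Sset (θ α₁ α₂ : ℝ) : Set (ℝ × AddCircle (1 : ℝ) × AddCircle (1 : ℝ)) :=
  {x | ∃ k m : ℕ, x = ((m : ℝ) - (k : ℝ) * θ,
    (((k : ℝ) * α₁ : ℝ) : AddCircle (1 : ℝ)),
    (((m : ℝ) * α₂ : ℝ) : AddCircle (1 : ℝ)))}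

/-- Suppose `1, θ, α₁` are linearly independent over `ℚ`, `q₂` is a positive integer and
`r₂ ∈ ℕ`. Then `{ ((q₂·m + r₂) − k·θ, k·α₁ mod 1) : k, m ∈ ℕ }` is dense in `ℝ × (ℝ/ℤ)`.
In particular, if `α₂ = p₂/q₂` is rational, then the closure of `S` contains
`ℝ × (ℝ/ℤ) × { r₂·α₂ mod 1 }`. -/
theorem stmt10 (θ α₁ α₂ : ℝ) (hθ : 0 < θ)
    (hα₁ : α₁ ∈ Set.Ioo (0 : ℝ) (1 / 2)) (hα₂ : α₂ ∈ Set.Ioo (0 : ℝ) (1 / 2))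
    (hli : LinearIndependent ℚ ![(1 : ℝ), θ, α₁])
    (q₂ : ℕ) (hq₂ : 0 < q₂) (r₂ : ℕ) :
    Dense {x : ℝ × AddCircle (1 : ℝ) | ∃ k m : ℕ,
      x = (((q₂ * m + r₂ : ℕ) : ℝ) - (k : ℝ) * θ,
        (((k : ℝ) * α₁ : ℝ) : AddCircle (1 : ℝ)))} ∧
    ∀ p₂ : ℤ, α₂ = (p₂ : ℝ) / (q₂ : ℝ) →
      ∀ (t : ℝ) (s : AddCircle (1 : ℝ)),
        (t, s, (((r₂ : ℝ) * α₂ : ℝ) : AddCircle (1 : ℝ))) ∈ closure (Sset θ α₁ α₂) := by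
  have hdense := key_dense θ α₁ hθ hli q₂ hq₂ r₂
  refine ⟨hdense, ?_⟩
  intro p₂ hp t s
  rw [Metric.mem_closure_iff]
  intro ε hε
  obtain ⟨y, hy1, hy2⟩ := Metric.dense_iff.mp hdense (t, s) ε hε
  obtain ⟨k, m, rfl⟩ := hy2
  refine ⟨(((q₂ * m + r₂ : ℕ) : ℝ) - (k : ℝ) * θ,
      (((k : ℝ) * α₁ : ℝ) : AddCircle (1 : ℝ)),
      ((((q₂ * m + r₂ : ℕ) : ℝ) * α₂ : ℝ) : AddCircle (1 : ℝ))), ⟨k, q₂ * m + r₂, rfl⟩, ?_⟩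
  have hq₂R : ((q₂ : ℕ) : ℝ) ≠ 0 := by
    exact_mod_cast hq₂.ne'
  have h3 : ((((q₂ * m + r₂ : ℕ) : ℝ) * α₂ : ℝ) : AddCircle (1 : ℝ))
      = (((r₂ : ℝ) * α₂ : ℝ) : AddCircle (1 : ℝ)) := by
    rw [QuotientAddGroup.eq_iff_sub_mem]
    refine AddSubgroup.mem_zmultiples_iff.mpr ⟨(m : ℤ) * p₂, ?_⟩
    rw [zsmul_eq_mul, mul_one]
    push_cast
    rw [hp]
    field_simp
    ring
  rw [Prod.dist_eq, Prod.dist_eq, h3, dist_self]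
  rw [Metric.mem_ball, Prod.dist_eq] at hy1
  apply max_lt
  · rw [dist_comm]
    exact lt_of_le_of_lt (le_max_left _ _) hy1
  · apply max_lt
    · rw [dist_comm]
      exact lt_of_le_of_lt (le_max_right _ _) hy1
    · exact hε
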